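/- For all integers m ≥ 1, k ≥ 1 and every real number x, Σ_{j=0}^{m} C(m,j) (q−1)^j E_{j,q}^{(0,k)}(x) = q^{mx} (1+q)^k / ∏_{i=0}^{k−1} (1 + q^{m−i}). -/

import Mathlib

open Finset

/-- The q-number `[x]_q = (1 - q^x)/(1 - q)`, with `q^x = exp (x * log q)` (rpow). -/
noncomputable def qNum (q x : ℝ) : ℝ := (1 - q ^ x) / (1 - q)

/-- `[l]_{-q} = (1 - (-q)^l)/(1 + q)` for a natural number `l`. -/
noncomputable def qNumNeg (q : ℝ) (l : ℕ) : ℝ := (1 - (-q) ^ l) / (1 + q)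

/-- The higher-order q-Euler polynomial
`E_{m,q}^{(h,k)}(x) = ((1+q)^k/(1-q)^m) * Σ_{j=0}^m C(m,j) (-1)^j q^{jx} / Π_{i=0}^{k-1} (1 + q^{h+j-i})`. -/
noncomputable def qE (q : ℝ) (h : ℤ) (k m : ℕ) (x : ℝ) : ℝ :=
  ((1 + q) ^ k / (1 - q) ^ m) *
    ∑ j ∈ Finset.range (m + 1),
      (m.choose j : ℝ) * (-1) ^ j * q ^ ((j : ℝ) * x) /
        ∏ i ∈ Finset.range k, (1 + q ^ ((h : ℝ) + (j : ℝ) - (i : ℝ)))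

lemma real_alt_sum (n : ℕ) :
    ∑ t ∈ range (n + 1), ((-1 : ℝ)) ^ t * (n.choose t : ℝ) = if n = 0 then 1 else 0 := by
  have h := Int.alternating_sum_range_choose (n := n)
  have := congrArg (fun z : ℤ => (z : ℝ)) h
  push_cast at this
  simpa using this

lemma key (m l : ℕ) (hl : l ≤ m) :
    ∑ j ∈ range (m + 1), ((-1 : ℝ)) ^ j * (m.choose j : ℝ) * (j.choose l : ℝ)
      = if l = m then (-1 : ℝ) ^ m else 0 := by
  have h1 : ∑ j ∈ range (m + 1), ((-1 : ℝ)) ^ j * (m.choose j : ℝ) * (j.choose l : ℝ)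
      = ∑ j ∈ Ico l (m + 1), ((-1 : ℝ)) ^ j * (m.choose j : ℝ) * (j.choose l : ℝ) := by
    refine (Finset.sum_subset ?_ ?_).symm
    · intro j hj; simp only [mem_Ico, mem_range] at *; omega
    · intro j hj hj'
      simp only [mem_Ico, mem_range] at *
      have : j < l := by omega
      rw [Nat.choose_eq_zero_of_lt this]
      simp
  rw [h1, Finset.sum_Ico_eq_sum_range]
  have hml : m + 1 - l = (m - l) + 1 := by omega
  rw [hml]
  have h2 : ∀ t ∈ range ((m - l) + 1),
      ((-1 : ℝ)) ^ (l + t) * (m.choose (l + t) : ℝ) * ((l + t).choose l : ℝ)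
        = ((-1 : ℝ)) ^ l * (m.choose l : ℝ) * (((-1 : ℝ)) ^ t * ((m - l).choose t : ℝ)) := by
    intro t ht
    simp only [mem_range] at ht
    have hltm : l + t ≤ m := by omega
    have := Nat.choose_mul (n := m) (k := l + t) (s := l) (Nat.le_add_right l t)
    have hcast : (m.choose (l + t) : ℝ) * ((l + t).choose l : ℝ)
        = (m.choose l : ℝ) * ((m - l).choose ((l + t) - l) : ℝ) := by
      exact_mod_cast congrArg (fun z : ℕ => (z : ℝ)) this
    simp only [Nat.add_sub_cancel_left] at hcast
    rw [pow_add]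
    calc (-1 : ℝ) ^ l * (-1 : ℝ) ^ t * (m.choose (l + t) : ℝ) * ((l + t).choose l : ℝ)
        = (-1 : ℝ) ^ l * (-1 : ℝ) ^ t * ((m.choose (l + t) : ℝ) * ((l + t).choose l : ℝ)) := by ring
      _ = (-1 : ℝ) ^ l * (-1 : ℝ) ^ t * ((m.choose l : ℝ) * ((m - l).choose t : ℝ)) := by rw [hcast]
      _ = _ := by ring
  rw [Finset.sum_congr rfl h2, ← Finset.mul_sum, real_alt_sum]
  rcases eq_or_ne l m with h | h
  · subst h; simp
  · have : m - l ≠ 0 := by omega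
    simp [this, h]

theorem stmt_1 (q : ℝ) (hq : 0 < q) (hq1 : q ≠ 1) (m k : ℕ) (hm : 1 ≤ m) (hk : 1 ≤ k)
    (x : ℝ) :
    ∑ j ∈ Finset.range (m + 1), (m.choose j : ℝ) * (q - 1) ^ j * qE q 0 k j x
      = q ^ ((m : ℝ) * x) * (1 + q) ^ k /
          ∏ i ∈ Finset.range k, (1 + q ^ ((m : ℝ) - (i : ℝ))) := by
  have h1q : (1 : ℝ) - q ≠ 0 := sub_ne_zero_of_ne (Ne.symm hq1)
  set P : ℕ → ℝ := fun l => ∏ i ∈ range k, (1 + q ^ ((l : ℝ) - (i : ℝ))) with hP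
  have step1 : ∀ j ∈ range (m + 1),
      (m.choose j : ℝ) * (q - 1) ^ j * qE q 0 k j x
        = ∑ l ∈ range (m + 1),
            ((-1 : ℝ)) ^ j * (m.choose j : ℝ) * (j.choose l : ℝ)
              * ((1 + q) ^ k * ((-1 : ℝ)) ^ l * q ^ ((l : ℝ) * x) / P l) := by
    intro j hj
    simp only [mem_range] at hj
    rw [qE]
    have hprod : ∀ l : ℕ,
        ∏ i ∈ range k, (1 + q ^ (((0 : ℤ) : ℝ) + (l : ℝ) - (i : ℝ))) = P l := by
      intro l
      simp [hP]
    simp only [hprod]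
    have hpow : (q - 1) ^ j * ((1 + q) ^ k / (1 - q) ^ j) = (-1 : ℝ) ^ j * (1 + q) ^ k := by
      rw [show q - 1 = (-1) * (1 - q) by ring, mul_pow]
      field_simp
    have hext : ∑ l ∈ range (j + 1),
          (j.choose l : ℝ) * (-1 : ℝ) ^ l * q ^ ((l : ℝ) * x) / P l
        = ∑ l ∈ range (m + 1),
          (j.choose l : ℝ) * (-1 : ℝ) ^ l * q ^ ((l : ℝ) * x) / P l := by
      refine Finset.sum_subset (Finset.range_subset_range.mpr (by omega)) ?_
      intro l hl hl'
      simp only [mem_range] at hl hl'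
      rw [Nat.choose_eq_zero_of_lt (by omega)]
      simp
    rw [hext]
    calc (m.choose j : ℝ) * (q - 1) ^ j *
          ((1 + q) ^ k / (1 - q) ^ j *
            ∑ l ∈ range (m + 1), (j.choose l : ℝ) * (-1 : ℝ) ^ l * q ^ ((l : ℝ) * x) / P l)
        = (m.choose j : ℝ) * ((q - 1) ^ j * ((1 + q) ^ k / (1 - q) ^ j)) *
            ∑ l ∈ range (m + 1), (j.choose l : ℝ) * (-1 : ℝ) ^ l * q ^ ((l : ℝ) * x) / P l := by
          ring
      _ = (m.choose j : ℝ) * ((-1 : ℝ) ^ j * (1 + q) ^ k) *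
            ∑ l ∈ range (m + 1), (j.choose l : ℝ) * (-1 : ℝ) ^ l * q ^ ((l : ℝ) * x) / P l := by
          rw [hpow]
      _ = _ := by
          rw [Finset.mul_sum]
          refine Finset.sum_congr rfl fun l _ => ?_
          ring
  rw [Finset.sum_congr rfl step1, Finset.sum_comm]
  have step2 : ∀ l ∈ range (m + 1),
      ∑ j ∈ range (m + 1),
          ((-1 : ℝ)) ^ j * (m.choose j : ℝ) * (j.choose l : ℝ)
            * ((1 + q) ^ k * ((-1 : ℝ)) ^ l * q ^ ((l : ℝ) * x) / P l)
        = if l = m then (1 + q) ^ k * q ^ ((m : ℝ) * x) / P m else 0 := by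
    intro l hl
    simp only [mem_range] at hl
    rw [← Finset.sum_mul, key m l (by omega)]
    rcases eq_or_ne l m with h | h
    · subst h
      rw [if_pos rfl, if_pos rfl]
      have : ((-1 : ℝ)) ^ l * ((-1 : ℝ)) ^ l = 1 := by
        rw [← pow_add, ← two_mul, pow_mul]; norm_num
      calc (-1 : ℝ) ^ l * ((1 + q) ^ k * (-1 : ℝ) ^ l * q ^ ((l : ℝ) * x) / P l)
          = ((-1 : ℝ) ^ l * (-1 : ℝ) ^ l) * ((1 + q) ^ k * q ^ ((l : ℝ) * x) / P l) := by ring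
        _ = _ := by rw [this]; ring
    · rw [if_neg h, if_neg h, zero_mul]
  rw [Finset.sum_congr rfl step2, Finset.sum_ite_eq' (range (m + 1)) m]
  rw [if_pos (by simp)]
  rw [hP]
  ring
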